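/- Let α be a real number and (c_n)_{n≥1} a sequence of positive integers, with q_n, A_n the data of the generalized alternating-Sylvester expansion of α. For every n ≥ 1, the tail series Σ_{k=n}^∞ (−1)^{k−1} q_k converges and (−1)^{n−1} · Σ_{k=n}^∞ (−1)^{k−1} q_k = A_n. -/

import Mathlib

open Filter Topology

/-- The rational value `c/⌊c/x⌋` used at each step (0 if `x = 0`). -/
noncomputable def gasQaux (cn : ℕ) (x : ℝ) : ℝ :=
  if x = 0 then 0 else (cn : ℝ) / (⌊(cn : ℝ) / x⌋ : ℝ)

/-- `gasA c α n` is `A_n` of the generalized alternating-Sylvester expansion of `α`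
(for `n ≥ 1`; the value at `0` is a dummy). `A_1 = α - ⌊α⌋`, `A_{n+1} = q_n - A_n`. -/
noncomputable def gasA (c : ℕ → ℕ) (α : ℝ) : ℕ → ℝ
  | 0 => 0
  | 1 => α - ⌊α⌋
  | n + 2 => gasQaux (c (n + 1)) (gasA c α (n + 1)) - gasA c α (n + 1)

/-- `gasQ c α n` is `q_n`: `q_0 = ⌊α⌋`; for `n ≥ 1`, `q_n = c_n / a_n` if `A_n ≠ 0`, else `0`. -/
noncomputable def gasQ (c : ℕ → ℕ) (α : ℝ) : ℕ → ℝ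
  | 0 => (⌊α⌋ : ℤ)
  | n + 1 => gasQaux (c (n + 1)) (gasA c α (n + 1))

/-- `gasa c α n` is `a_n = ⌊c_n / A_n⌋` (meaningful when `A_n ≠ 0`). -/
noncomputable def gasa (c : ℕ → ℕ) (α : ℝ) (n : ℕ) : ℤ :=
  ⌊(c n : ℝ) / gasA c α n⌋

lemma gasQaux_step (cn : ℕ) (hc : 1 ≤ cn) (x : ℝ) (hx0 : 0 ≤ x) (hx1 : x ≤ 1) :
    0 ≤ gasQaux cn x - x ∧ gasQaux cn x - x ≤ 1/2 ∧ (x ≤ 1/2 → gasQaux cn x - x ≤ x/2) := by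
  rcases eq_or_lt_of_le hx0 with h0 | hx
  · simp [gasQaux, ← h0]
  · have hxne : x ≠ 0 := ne_of_gt hx
    have hc1 : (1:ℝ) ≤ (cn:ℝ) := by exact_mod_cast hc
    set a : ℤ := ⌊(cn : ℝ) / x⌋ with ha
    have hca : (cn:ℤ) ≤ a := by
      rw [ha, Int.le_floor]
      push_cast
      rw [le_div_iff₀ hx]
      nlinarith
    have hcaR : (cn:ℝ) ≤ (a:ℝ) := by exact_mod_cast hca
    have ha1 : (1:ℝ) ≤ (a:ℝ) := le_trans hc1 hcaR
    have ha0 : (0:ℝ) < (a:ℝ) := by linarith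
    have hfl : (a:ℝ) ≤ (cn:ℝ) / x := Int.floor_le _
    have hfl2 : (cn:ℝ) / x < (a:ℝ) + 1 := Int.lt_floor_add_one _
    have hxa : x ≤ (cn:ℝ) / (a:ℝ) := by
      rw [le_div_iff₀ ha0]
      calc x * a ≤ ((cn:ℝ)/x) * x := by nlinarith
        _ = cn := by field_simp
    have hax : (cn:ℝ) < ((a:ℝ) + 1) * x := by
      rw [div_lt_iff₀ hx] at hfl2; linarith
    have hq : gasQaux cn x = (cn:ℝ) / (a:ℝ) := by simp [gasQaux, hxne, ha]
    rw [hq]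
    refine ⟨by linarith, ?_, ?_⟩
    · rw [sub_le_iff_le_add, div_le_iff₀ ha0]
      nlinarith
    · intro hhalf
      have ha2 : (2:ℝ) ≤ (a:ℝ) := by
        have : (2:ℤ) ≤ a := by
          rw [ha, Int.le_floor]
          push_cast
          rw [le_div_iff₀ hx]
          nlinarith
        exact_mod_cast this
      rw [sub_le_iff_le_add, div_le_iff₀ ha0]
      nlinarith

lemma gasA_inv (c : ℕ → ℕ) (hc : ∀ n, 1 ≤ n → 0 < c n) (α : ℝ) :
    ∀ n, 0 ≤ gasA c α n ∧ gasA c α n ≤ 1 := by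
  intro n
  induction n with
  | zero => simp [gasA]
  | succ m ih =>
    match m, ih with
    | 0, _ =>
      constructor
      · simpa [gasA] using (Int.floor_le α)
      · have := Int.lt_floor_add_one α
        simp only [gasA]; linarith
    | k + 1, ih =>
      have hstep := gasQaux_step (c (k+1)) (hc (k+1) (Nat.le_add_left 1 k)) _ ih.1 ih.2
      have he : gasA c α (k+2) = gasQaux (c (k+1)) (gasA c α (k+1)) - gasA c α (k+1) := rfl
      rw [he]
      exact ⟨hstep.1, by linarith [hstep.2.1]⟩

lemma gasA_half (c : ℕ → ℕ) (hc : ∀ n, 1 ≤ n → 0 < c n) (α : ℝ) (n : ℕ) :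
    gasA c α (n + 2) ≤ 1/2 := by
  have ih := gasA_inv c hc α (n+1)
  have hstep := gasQaux_step (c (n+1)) (hc (n+1) (Nat.le_add_left 1 n)) _ ih.1 ih.2
  have he : gasA c α (n+2) = gasQaux (c (n+1)) (gasA c α (n+1)) - gasA c α (n+1) := rfl
  rw [he]; exact hstep.2.1

lemma gasA_geo (c : ℕ → ℕ) (hc : ∀ n, 1 ≤ n → 0 < c n) (α : ℝ) :
    ∀ k, gasA c α (k + 2) ≤ (1/2 : ℝ)^(k+1) := by
  intro k
  induction k with
  | zero => simpa using gasA_half c hc α 0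
  | succ m ih =>
    have ih2 := gasA_inv c hc α (m+2)
    have hh : gasA c α (m+2) ≤ 1/2 := gasA_half c hc α m
    have hstep := gasQaux_step (c (m+2)) (hc (m+2) (Nat.le_add_left 1 (m+1))) _ ih2.1 ih2.2
    have he : gasA c α (m+3) = gasQaux (c (m+2)) (gasA c α (m+2)) - gasA c α (m+2) := rfl
    have key : gasA c α (m+3) ≤ gasA c α (m+2) / 2 := by rw [he]; exact hstep.2.2 hh
    calc gasA c α (m+3) ≤ gasA c α (m+2) / 2 := key
      _ ≤ (1/2:ℝ)^(m+1) / 2 := by linarith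
      _ = (1/2:ℝ)^(m+2) := by ring

lemma gasA_bound (c : ℕ → ℕ) (hc : ∀ n, 1 ≤ n → 0 < c n) (α : ℝ) :
    ∀ m, gasA c α m ≤ 2 * (1/2 : ℝ)^m := by
  intro m
  match m with
  | 0 => norm_num [gasA]
  | 1 =>
    have := (gasA_inv c hc α 1).2
    norm_num
    linarith
  | k + 2 =>
    calc gasA c α (k+2) ≤ (1/2:ℝ)^(k+1) := gasA_geo c hc α k
      _ = 2 * (1/2:ℝ)^(k+2) := by ring

lemma gasQ_eq (c : ℕ → ℕ) (α : ℝ) (m : ℕ) (hm : 1 ≤ m) :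
    gasQ c α m = gasA c α m + gasA c α (m + 1) := by
  match m, hm with
  | k + 1, _ =>
    show gasQaux (c (k+1)) (gasA c α (k+1)) =
      gasA c α (k+1) + (gasQaux (c (k+1)) (gasA c α (k+1)) - gasA c α (k+1))
    ring

/-- For every $n \ge 1$, the tail series $\sum_{k=n}^\infty (-1)^{k-1} q_k$ converges and
$(-1)^{n-1} \sum_{k=n}^\infty (-1)^{k-1} q_k = A_n$. -/
theorem gas_tail_sum_eq_An (c : ℕ → ℕ) (hc : ∀ n, 1 ≤ n → 0 < c n) (α : ℝ) :
    ∀ n, 1 ≤ n → ∃ S : ℝ,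
      Tendsto (fun N : ℕ => ∑ k ∈ Finset.range N, (-1 : ℝ) ^ (n + k - 1) * gasQ c α (n + k))
        atTop (𝓝 S) ∧
      (-1 : ℝ) ^ (n - 1) * S = gasA c α n := by
  intro n hn
  set F : ℕ → ℝ := fun k => (-1 : ℝ) ^ (n + k - 1) * gasA c α (n + k) with hF
  refine ⟨F 0, ?_, ?_⟩
  · have hsum : ∀ N : ℕ,
        ∑ k ∈ Finset.range N, (-1 : ℝ) ^ (n + k - 1) * gasQ c α (n + k) = F 0 - F N := by
      intro N
      rw [← Finset.sum_range_sub' F N]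
      refine Finset.sum_congr rfl fun k _ => ?_
      have hq := gasQ_eq c α (n + k) (le_trans hn (Nat.le_add_right n k))
      have hpow : (-1 : ℝ) ^ (n + k) = (-1 : ℝ) ^ (n + k - 1) * (-1) := by
        rw [← pow_succ]
        congr 1
        omega
      simp only [hF, hq, show n + (k+1) = n + k + 1 from rfl, Nat.add_sub_cancel, hpow]
      ring
    simp only [hsum]
    have hFt : Tendsto F atTop (𝓝 0) := by
      refine squeeze_zero_norm (a := fun N : ℕ => 2 * (1/2 : ℝ)^N) (fun N => ?_) ?_
      · have h1 : ‖F N‖ = gasA c α (n + N) := by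
          rw [hF]
          simp only [norm_mul, norm_pow, norm_neg, norm_one, one_pow, one_mul]
          exact abs_of_nonneg (gasA_inv c hc α (n + N)).1
        rw [h1]
        calc gasA c α (n + N) ≤ 2 * (1/2:ℝ)^(n+N) := gasA_bound c hc α (n+N)
          _ ≤ 2 * (1/2:ℝ)^N := by
            have := pow_le_pow_of_le_one (by norm_num : (0:ℝ) ≤ 1/2)
              (by norm_num : (1/2:ℝ) ≤ 1) (Nat.le_add_left N n)
            linarith
      · have := (tendsto_pow_atTop_nhds_zero_of_lt_one (by norm_num : (0:ℝ) ≤ 1/2)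
          (by norm_num : (1/2:ℝ) < 1)).const_mul (2:ℝ)
        simpa using this
    simpa using (tendsto_const_nhds.sub hFt)
  · rw [hF]
    simp only [Nat.add_zero]
    rw [← mul_assoc, ← pow_add]
    rw [Even.neg_one_pow ⟨n - 1, by omega⟩, one_mul]
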